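/- arXiv:2211.03757 — 2 statements merged into one kernel-verified Lean document; each statement's English description precedes it below -/
import Mathlib

section
/- Let $\tilde{p}$ and $\hat{\tilde{p}}$ be probability distributions on a finite set $B \cup \{\bot\}$ with $\tilde{p}(\bot) < 1$ and $\hat{\tilde{p}}(\bot) < 1$. Define $\bar{p}(x) = \tilde{p}(x)/(1 - \tilde{p}(\bot))$ and $\hat{p}(x) = \hat{\tilde{p}}(x)/(1 - \hat{\tilde{p}}(\bot))$ for $x \in B$, which are probability distributions on $B$. Then $\sum_{x \in B} |\hat{p}(x) - \bar{p}(x)| \le \frac{1}{1 - \tilde{p}(\bot)}\left(|\hat{\tilde{p}}(\bot) - \tilde{p}(\bot)| + \sum_{x \in B} |\hat{\tilde{p}}(x) - \tilde{p}(x)|\right)$. -/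
open Finset

/-- ℓ₁ error of conditional (renormalized) distributions: if `tp, htp` are probability
distributions on `B ∪ {⊥}` (with `⊥`-masses `tpb, htpb < 1`), and `barp, hp` are the
renormalized conditional distributions on `B`, then
`∑_{x ∈ B} |hp x - barp x| ≤ (|htpb - tpb| + ∑_{x ∈ B} |htp x - tp x|) / (1 - tpb)`. -/
theorem conditional_l1_bound {α : Type*} (B : Finset α)
    (tp htp : α → ℝ) (tpb htpb : ℝ)
    (htp_nn : ∀ x ∈ B, 0 ≤ tp x) (htpb_nn : 0 ≤ tpb)
    (htp_sum : (∑ x ∈ B, tp x) + tpb = 1) (htpb_lt : tpb < 1)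
    (hhtp_nn : ∀ x ∈ B, 0 ≤ htp x) (hhtpb_nn : 0 ≤ htpb)
    (hhtp_sum : (∑ x ∈ B, htp x) + htpb = 1) (hhtpb_lt : htpb < 1) :
    ∑ x ∈ B, |htp x / (1 - htpb) - tp x / (1 - tpb)|
      ≤ (1 / (1 - tpb)) * (|htpb - tpb| + ∑ x ∈ B, |htp x - tp x|) := by
  have ha : 0 < 1 - tpb := by linarith
  have hb : 0 < 1 - htpb := by linarith
  have key : ∀ x ∈ B, |htp x / (1 - htpb) - tp x / (1 - tpb)|
      ≤ |htp x - tp x| / (1 - tpb) + htp x * (|htpb - tpb| / ((1 - tpb) * (1 - htpb))) := by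
    intro x hx
    have h1 : htp x / (1 - htpb) - tp x / (1 - tpb)
        = (htp x - tp x) / (1 - tpb) + htp x * ((htpb - tpb) / ((1 - tpb) * (1 - htpb))) := by
      field_simp
      ring
    rw [h1]
    refine (abs_add_le _ _).trans ?_
    have h2 : |(htp x - tp x) / (1 - tpb)| = |htp x - tp x| / (1 - tpb) := by
      rw [abs_div, abs_of_pos ha]
    have h3 : |htp x * ((htpb - tpb) / ((1 - tpb) * (1 - htpb)))|
        = htp x * (|htpb - tpb| / ((1 - tpb) * (1 - htpb))) := by
      rw [abs_mul, abs_of_nonneg (hhtp_nn x hx), abs_div,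
        abs_of_pos (mul_pos ha hb)]
    rw [h2, h3]
  calc ∑ x ∈ B, |htp x / (1 - htpb) - tp x / (1 - tpb)|
      ≤ ∑ x ∈ B, (|htp x - tp x| / (1 - tpb)
          + htp x * (|htpb - tpb| / ((1 - tpb) * (1 - htpb)))) := sum_le_sum key
    _ = (∑ x ∈ B, |htp x - tp x|) / (1 - tpb)
          + (∑ x ∈ B, htp x) * (|htpb - tpb| / ((1 - tpb) * (1 - htpb))) := by
        rw [sum_add_distrib, sum_div, ← sum_mul]
    _ = (1 / (1 - tpb)) * (|htpb - tpb| + ∑ x ∈ B, |htp x - tp x|) := by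
        have : (∑ x ∈ B, htp x) = 1 - htpb := by linarith
        rw [this]
        field_simp
        ring
end

section
/- Let $X$ be a random variable and $Y = (Y_1, Y_2)$ be obtained by passing $X$ through two conditionally independent channels $W_1$ and $W_2$, where $Y_1 \in \{0,1\}$ is binary and $W_2$ satisfies $\varepsilon$-local differential privacy (i.e., for all $x, x', y_2$: $W_2(y_2 \mid x) \le e^{\varepsilon} W_2(y_2 \mid x')$). Then the mutual information satisfies $I(X; Y_1, Y_2) \le \varepsilon \log_2 e + 1$ bits. -/
open Finset

/-- Mutual information bound for `ε`-LDP + 1-bit channels. If `X ∼ px` (on a finite alphabet)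
and `Y = (Y₁, Y₂)` is obtained via two conditionally independent channels, where `Y₁` is binary
and `W₂` satisfies `ε`-LDP, then `I(X; Y₁, Y₂) ≤ ε log₂ e + 1` bits. -/
theorem mutual_info_ldp_plus_bit (a b : ℕ) (ε : ℝ) (hε : 0 ≤ ε)
    (px : Fin a → ℝ) (W1 : Fin a → Fin 2 → ℝ) (W2 : Fin a → Fin b → ℝ)
    (hpx_nn : ∀ x, 0 ≤ px x) (hpx_sum : ∑ x, px x = 1)
    (hW1_nn : ∀ x y, 0 ≤ W1 x y) (hW1_sum : ∀ x, ∑ y, W1 x y = 1)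
    (hW2_nn : ∀ x y, 0 ≤ W2 x y) (hW2_sum : ∀ x, ∑ y, W2 x y = 1)
    (hldp : ∀ x x' y2, W2 x y2 ≤ Real.exp ε * W2 x' y2) :
    ∑ x, ∑ y1, ∑ y2,
        px x * W1 x y1 * W2 x y2 *
          Real.logb 2 ((W1 x y1 * W2 x y2) / ∑ x', px x' * W1 x' y1 * W2 x' y2)
      ≤ ε * Real.logb 2 (Real.exp 1) + 1 := by
  set P1 : Fin 2 → ℝ := fun y1 => ∑ x, px x * W1 x y1 with hP1def
  have hP1_nn : ∀ y1, 0 ≤ P1 y1 := fun y1 =>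
    Finset.sum_nonneg fun x _ => mul_nonneg (hpx_nn x) (hW1_nn x y1)
  have hP1_sum : ∑ y1, P1 y1 = 1 := by
    rw [hP1def, Finset.sum_comm]
    have h : ∀ x, ∑ y1, px x * W1 x y1 = px x := fun x => by
      rw [← Finset.mul_sum, hW1_sum, mul_one]
    simp [h, hpx_sum]
  -- Step 1: pointwise bound using LDP
  have step1 : ∀ x y1 y2, px x * W1 x y1 * W2 x y2 *
      Real.logb 2 ((W1 x y1 * W2 x y2) / ∑ x', px x' * W1 x' y1 * W2 x' y2)
      ≤ px x * W1 x y1 * W2 x y2 * (ε * Real.logb 2 (Real.exp 1))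
        + px x * W1 x y1 * W2 x y2 * Real.logb 2 (W1 x y1 / P1 y1) := by
    intro x y1 y2
    by_cases hm : px x * W1 x y1 * W2 x y2 = 0
    · simp [hm]
    have hmnn : 0 ≤ px x * W1 x y1 * W2 x y2 :=
      mul_nonneg (mul_nonneg (hpx_nn x) (hW1_nn x y1)) (hW2_nn x y2)
    have hmpos : 0 < px x * W1 x y1 * W2 x y2 := lt_of_le_of_ne hmnn (Ne.symm hm)
    have hpxp : 0 < px x := by
      rcases (hpx_nn x).lt_or_eq with h | h
      · exact h
      · exfalso; apply hm; rw [← h]; ring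
    have hW1p : 0 < W1 x y1 := by
      rcases (hW1_nn x y1).lt_or_eq with h | h
      · exact h
      · exfalso; apply hm; rw [← h]; ring
    have hW2p : 0 < W2 x y2 := by
      rcases (hW2_nn x y2).lt_or_eq with h | h
      · exact h
      · exfalso; apply hm; rw [← h]; ring
    have hD : 0 < ∑ x', px x' * W1 x' y1 * W2 x' y2 :=
      lt_of_lt_of_le hmpos (Finset.single_le_sum
        (fun i _ => mul_nonneg (mul_nonneg (hpx_nn i) (hW1_nn i y1)) (hW2_nn i y2))
        (Finset.mem_univ x))
    have hP1p : 0 < P1 y1 :=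
      lt_of_lt_of_le (mul_pos hpxp hW1p) (Finset.single_le_sum
        (fun i _ => mul_nonneg (hpx_nn i) (hW1_nn i y1)) (Finset.mem_univ x))
    have hratio : W2 x y2 * P1 y1 ≤ Real.exp ε * ∑ x', px x' * W1 x' y1 * W2 x' y2 := by
      rw [hP1def, Finset.mul_sum, Finset.mul_sum]
      apply Finset.sum_le_sum
      intro i _
      have := mul_le_mul_of_nonneg_left (hldp x i y2)
        (mul_nonneg (hpx_nn i) (hW1_nn i y1))
      calc W2 x y2 * (px i * W1 i y1) = px i * W1 i y1 * W2 x y2 := by ring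
        _ ≤ px i * W1 i y1 * (Real.exp ε * W2 i y2) := this
        _ = Real.exp ε * (px i * W1 i y1 * W2 i y2) := by ring
    have hfrac : (W1 x y1 * W2 x y2) / (∑ x', px x' * W1 x' y1 * W2 x' y2)
        ≤ Real.exp ε * (W1 x y1 / P1 y1) := by
      rw [div_le_iff₀ hD]
      rw [mul_comm (Real.exp ε) (W1 x y1 / P1 y1), mul_assoc, div_mul_eq_mul_div,
        le_div_iff₀ hP1p]
      nlinarith [hratio, hW1p.le]
    have hlog : Real.logb 2 ((W1 x y1 * W2 x y2) / ∑ x', px x' * W1 x' y1 * W2 x' y2)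
        ≤ ε * Real.logb 2 (Real.exp 1) + Real.logb 2 (W1 x y1 / P1 y1) := by
      have h1 : Real.logb 2 ((W1 x y1 * W2 x y2) / ∑ x', px x' * W1 x' y1 * W2 x' y2)
          ≤ Real.logb 2 (Real.exp ε * (W1 x y1 / P1 y1)) :=
        Real.logb_le_logb_of_le (by norm_num) (div_pos (mul_pos hW1p hW2p) hD) hfrac
      refine h1.trans_eq ?_
      rw [Real.logb_mul (Real.exp_pos ε).ne' (div_pos hW1p hP1p).ne']
      congr 1
      rw [Real.logb, Real.logb, Real.log_exp, Real.log_exp]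
      ring
    calc px x * W1 x y1 * W2 x y2 *
          Real.logb 2 ((W1 x y1 * W2 x y2) / ∑ x', px x' * W1 x' y1 * W2 x' y2)
        ≤ px x * W1 x y1 * W2 x y2 *
          (ε * Real.logb 2 (Real.exp 1) + Real.logb 2 (W1 x y1 / P1 y1)) :=
          mul_le_mul_of_nonneg_left hlog hmnn
      _ = _ := by ring
  -- Step 2: sum up
  have sum1 : ∑ x, ∑ y1, ∑ y2, px x * W1 x y1 * W2 x y2 * (ε * Real.logb 2 (Real.exp 1))
      = ε * Real.logb 2 (Real.exp 1) := by
    have : ∀ x : Fin a, ∀ y1 : Fin 2,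
        ∑ y2, px x * W1 x y1 * W2 x y2 * (ε * Real.logb 2 (Real.exp 1))
        = px x * W1 x y1 * (ε * Real.logb 2 (Real.exp 1)) := by
      intro x y1
      rw [← Finset.sum_mul, ← Finset.mul_sum, hW2_sum, mul_one]
    simp_rw [this]
    have : ∀ x : Fin a, ∑ y1, px x * W1 x y1 * (ε * Real.logb 2 (Real.exp 1))
        = px x * (ε * Real.logb 2 (Real.exp 1)) := by
      intro x
      rw [← Finset.sum_mul, ← Finset.mul_sum, hW1_sum, mul_one]
    simp_rw [this, ← Finset.sum_mul, hpx_sum, one_mul]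
  have sum2 : ∑ x, ∑ y1, ∑ y2, px x * W1 x y1 * W2 x y2 * Real.logb 2 (W1 x y1 / P1 y1)
      = ∑ x, ∑ y1, px x * W1 x y1 * Real.logb 2 (W1 x y1 / P1 y1) := by
    apply Finset.sum_congr rfl; intro x _
    apply Finset.sum_congr rfl; intro y1 _
    have : ∀ y2 : Fin b, px x * W1 x y1 * W2 x y2 * Real.logb 2 (W1 x y1 / P1 y1)
        = (px x * W1 x y1 * Real.logb 2 (W1 x y1 / P1 y1)) * W2 x y2 := by
      intro y2; ring
    simp_rw [this, ← Finset.mul_sum, hW2_sum, mul_one]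
  -- Step 3: I(X;Y1) ≤ H(Y1) ≤ 1
  have step3 : ∀ x y1, px x * W1 x y1 * Real.logb 2 (W1 x y1 / P1 y1)
      ≤ -(px x * W1 x y1 * Real.logb 2 (P1 y1)) := by
    intro x y1
    by_cases hm : px x * W1 x y1 = 0
    · simp [hm]
    have hmnn : 0 ≤ px x * W1 x y1 := mul_nonneg (hpx_nn x) (hW1_nn x y1)
    have hmpos : 0 < px x * W1 x y1 := lt_of_le_of_ne hmnn (Ne.symm hm)
    have hpxp : 0 < px x := by
      rcases (hpx_nn x).lt_or_eq with h | h
      · exact h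
      · exfalso; apply hm; rw [← h]; ring
    have hW1p : 0 < W1 x y1 := by
      rcases (hW1_nn x y1).lt_or_eq with h | h
      · exact h
      · exfalso; apply hm; rw [← h]; ring
    have hP1p : 0 < P1 y1 :=
      lt_of_lt_of_le hmpos (Finset.single_le_sum
        (fun i _ => mul_nonneg (hpx_nn i) (hW1_nn i y1)) (Finset.mem_univ x))
    have hW1le : W1 x y1 ≤ 1 := by
      rw [← hW1_sum x]
      exact Finset.single_le_sum (fun i _ => hW1_nn x i) (Finset.mem_univ y1)
    have hlog : Real.logb 2 (W1 x y1 / P1 y1) ≤ -Real.logb 2 (P1 y1) := by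
      have h1 : Real.logb 2 (W1 x y1 / P1 y1) ≤ Real.logb 2 (P1 y1)⁻¹ := by
        apply Real.logb_le_logb_of_le (by norm_num) (div_pos hW1p hP1p)
        rw [div_le_iff₀ hP1p, inv_mul_cancel₀ hP1p.ne']
        exact hW1le
      rw [Real.logb_inv] at h1
      exact h1
    calc px x * W1 x y1 * Real.logb 2 (W1 x y1 / P1 y1)
        ≤ px x * W1 x y1 * (-Real.logb 2 (P1 y1)) := mul_le_mul_of_nonneg_left hlog hmnn
      _ = -(px x * W1 x y1 * Real.logb 2 (P1 y1)) := by ring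
  have sum3 : ∑ x, ∑ y1, -(px x * W1 x y1 * Real.logb 2 (P1 y1))
      = ∑ y1, -(P1 y1 * Real.logb 2 (P1 y1)) := by
    rw [Finset.sum_comm]
    apply Finset.sum_congr rfl; intro y1 _
    rw [Finset.sum_neg_distrib]
    congr 1
    simp only [hP1def]
    rw [Finset.sum_mul]
  have hent : ∑ y1 : Fin 2, -(P1 y1 * Real.logb 2 (P1 y1)) ≤ 1 := by
    rw [Fin.sum_univ_two]
    have hq : P1 1 = 1 - P1 0 := by
      have := hP1_sum
      rw [Fin.sum_univ_two] at this
      linarith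
    have hbe := Real.binEntropy_le_log_two (p := P1 0)
    rw [Real.binEntropy] at hbe
    have hlog2 : (0:ℝ) < Real.log 2 := Real.log_pos (by norm_num)
    have e0 : -(P1 0 * Real.logb 2 (P1 0)) = P1 0 * Real.log (P1 0)⁻¹ / Real.log 2 := by
      rw [Real.log_inv, Real.logb]; ring
    have e1 : -(P1 1 * Real.logb 2 (P1 1))
        = (1 - P1 0) * Real.log (1 - P1 0)⁻¹ / Real.log 2 := by
      rw [hq, Real.log_inv, Real.logb]; ring
    rw [e0, e1, ← add_div, div_le_one hlog2]
    exact hbe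
  -- Combine
  calc ∑ x, ∑ y1, ∑ y2, px x * W1 x y1 * W2 x y2 *
        Real.logb 2 ((W1 x y1 * W2 x y2) / ∑ x', px x' * W1 x' y1 * W2 x' y2)
      ≤ ∑ x, ∑ y1, ∑ y2,
        (px x * W1 x y1 * W2 x y2 * (ε * Real.logb 2 (Real.exp 1))
          + px x * W1 x y1 * W2 x y2 * Real.logb 2 (W1 x y1 / P1 y1)) := by
        apply Finset.sum_le_sum; intro x _
        apply Finset.sum_le_sum; intro y1 _
        apply Finset.sum_le_sum; intro y2 _
        exact step1 x y1 y2
    _ = (∑ x, ∑ y1, ∑ y2, px x * W1 x y1 * W2 x y2 * (ε * Real.logb 2 (Real.exp 1)))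
        + ∑ x, ∑ y1, ∑ y2, px x * W1 x y1 * W2 x y2 * Real.logb 2 (W1 x y1 / P1 y1) := by
        simp_rw [Finset.sum_add_distrib]
    _ ≤ ε * Real.logb 2 (Real.exp 1) + 1 := by
        rw [sum1, sum2]
        gcongr
        calc ∑ x, ∑ y1, px x * W1 x y1 * Real.logb 2 (W1 x y1 / P1 y1)
            ≤ ∑ x, ∑ y1, -(px x * W1 x y1 * Real.logb 2 (P1 y1)) := by
              apply Finset.sum_le_sum; intro x _
              apply Finset.sum_le_sum; intro y1 _
              exact step3 x y1
          _ = ∑ y1, -(P1 y1 * Real.logb 2 (P1 y1)) := sum3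
          _ ≤ 1 := hent
end
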